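/- For every integer N ≥ 1 the following explicit bounds hold: H(η(N); 0) = H(η(N); 1) = 1; if s ≥ 1 then 0 < H(η(N); s) < 2^{s+1} − 1; if 0 < s < 1 then 0 < H(η(N); s) < (2^{s+1} − 1)/(2^s − 1); if −1 < s < 0 then 0 < H(η(N); s) < 2^{s+1}/(2^{s+1} − 1). Moreover |K(η(N))| ≤ 5 log 4 and |R(η(N))| ≤ 6 log 2. In particular, for each fixed s > −1 the sequences (H(η(N); s))_{N≥1}, (K(η(N)))_{N≥1}, and (R(η(N)))_{N≥1} are bounded. -/

import Mathlib

open Filter Topology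

noncomputable section

namespace GreedyEnergy

/-- Decreasing list `n₁ > n₂ > ⋯ > n_p` of the binary exponents of `N`,
so that `N = 2^{n₁} + ⋯ + 2^{n_p}` with `n₁ > n₂ > ⋯ > n_p ≥ 0`. -/
def binExps (N : ℕ) : List ℕ :=
  ((List.range (N + 1)).filter fun i => N.testBit i).reverse

/-- The number `p = τ_b(N)` of ones in the binary expansion of `N`. -/
def pbin (N : ℕ) : ℕ := (binExps N).length

/-- `η(N)` viewed as an infinite sequence (0-indexed): the entry of index `k`
is `θ_{k+1} = 2^{n_{k+1}}/N` for `k < p`, and `0` for `k ≥ p`. -/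
def eta (N : ℕ) : ℕ → ℝ :=
  fun k => ((binExps N).map fun n => (2 : ℝ) ^ n / (N : ℝ)).getD k 0

/-- `H(θ; s)` for a finite vector of length `p` given (0-indexed) by `θ : ℕ → ℝ`:
`H(θ;s) = Σ_{k=1}^p θ_k^{s+1} + 2(2^s − 1) Σ_{k=1}^{p−1} θ_k^s Σ_{j=k+1}^p θ_j`. -/
def Hvec (θ : ℕ → ℝ) (p : ℕ) (s : ℝ) : ℝ :=
  (∑ k ∈ Finset.range p, θ k ^ (s + 1)) +
    2 * ((2 : ℝ) ^ s - 1) *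
      ∑ k ∈ Finset.range p, θ k ^ s * ∑ j ∈ Finset.Ico (k + 1) p, θ j

/-- `K(θ) = 2 log 2 + Σ_{k=1}^p θ_k² log(θ_k/4) + 2 Σ_{k=1}^{p−1} (Σ_{j=k+1}^p θ_j) θ_k log θ_k`. -/
def Kvec (θ : ℕ → ℝ) (p : ℕ) : ℝ :=
  2 * Real.log 2 + (∑ k ∈ Finset.range p, θ k ^ 2 * Real.log (θ k / 4)) +
    2 * ∑ k ∈ Finset.range p, (∑ j ∈ Finset.Ico (k + 1) p, θ j) * (θ k * Real.log (θ k))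

/-- `R(θ) = −(2 log 2) Σ_{k=1}^p (k−1) θ_k − Σ_{k=1}^p θ_k log θ_k` (0-indexed: `k−1 ↦ k`). -/
def Rvec (θ : ℕ → ℝ) (p : ℕ) : ℝ :=
  -(2 * Real.log 2) * (∑ k ∈ Finset.range p, (k : ℝ) * θ k) -
    ∑ k ∈ Finset.range p, θ k * Real.log (θ k)

/-- `G(θ; s) = Σ_{k=1}^p θ_k^s`. -/
def Gvec (θ : ℕ → ℝ) (p : ℕ) (s : ℝ) : ℝ := ∑ k ∈ Finset.range p, θ k ^ s

/-- `Λ(θ) = Σ_{k=1}^p θ_k log θ_k`. -/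
def Λvec (θ : ℕ → ℝ) (p : ℕ) : ℝ := ∑ k ∈ Finset.range p, θ k * Real.log (θ k)

/-- `H(η(N); s)`. -/
def Heta (N : ℕ) (s : ℝ) : ℝ := Hvec (eta N) (pbin N) s

/-- `K(η(N))`. -/
def Keta (N : ℕ) : ℝ := Kvec (eta N) (pbin N)

/-- `R(η(N))`. -/
def Reta (N : ℕ) : ℝ := Rvec (eta N) (pbin N)

/-- `G(η(N); s)`. -/
def Geta (N : ℕ) (s : ℝ) : ℝ := Gvec (eta N) (pbin N) s

/-- `Λ(η(N))`. -/
def Λeta (N : ℕ) : ℝ := Λvec (eta N) (pbin N)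

/-- The set `𝒮` of infinite sequences `ϑ` for which there is a strictly increasing
sequence of positive integers `N_m` with `ϑ_j = lim_m (η(N_m))_j` for every `j`. -/
def Sset : Set (ℕ → ℝ) :=
  {ϑ | ∃ Nm : ℕ → ℕ, StrictMono Nm ∧ (∀ m, 1 ≤ Nm m) ∧
        ∀ j, Tendsto (fun m => eta (Nm m) j) atTop (𝓝 (ϑ j))}

/-- `H(ϑ; s)` for an infinite sequence `ϑ` (0-indexed). The conventions
`ϑ_n log ϑ_n = 0` and `ϑ_n^s ϑ_j = 0` when `ϑ_n = 0` hold automatically,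
since `Real.log 0 = 0` and `(0:ℝ) ^ s = 0` for `s ≠ 0` (and the factor
`2^s − 1` vanishes when `s = 0`). -/
def Hinf (ϑ : ℕ → ℝ) (s : ℝ) : ℝ :=
  (∑' n : ℕ, ϑ n ^ (s + 1)) +
    2 * ((2 : ℝ) ^ s - 1) * ∑' n : ℕ, ϑ n ^ s * ∑' j : ℕ, ϑ (n + 1 + j)

/-- `K(ϑ)` for an infinite sequence `ϑ`. -/
def Kinf (ϑ : ℕ → ℝ) : ℝ :=
  2 * Real.log 2 + (∑' n : ℕ, ϑ n ^ 2 * Real.log (ϑ n / 4)) +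
    2 * ∑' n : ℕ, (∑' j : ℕ, ϑ (n + 1 + j)) * (ϑ n * Real.log (ϑ n))

/-- `R(ϑ)` for an infinite sequence `ϑ` (0-indexed: `n−1 ↦ n`). -/
def Rinf (ϑ : ℕ → ℝ) : ℝ :=
  -(2 * Real.log 2) * (∑' n : ℕ, (n : ℝ) * ϑ n) - ∑' n : ℕ, ϑ n * Real.log (ϑ n)

/-- The set of limit points of a real sequence: values of convergent subsequences. -/
def limitPoints (x : ℕ → ℝ) : Set ℝ :=
  {L | ∃ φ : ℕ → ℕ, StrictMono φ ∧ Tendsto (fun m => x (φ m)) atTop (𝓝 L)}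

/-- The Riesz `s`-kernel: `k_s(z,w) = |z−w|^{−s}` for `s ≠ 0`, `k_0(z,w) = −log|z−w|`. -/
def kernel (s : ℝ) (z w : ℂ) : ℝ :=
  if s = 0 then -Real.log ‖z - w‖ else ‖z - w‖ ^ (-s)

/-- The Riesz `s`-energy `E_s(a_0, …, a_{N−1}) = Σ_{i ≠ j} k_s(a_i, a_j)`. -/
def energy (s : ℝ) (a : ℕ → ℂ) (N : ℕ) : ℝ :=
  ∑ i ∈ Finset.range N, ∑ j ∈ Finset.range N,
    if i ≠ j then kernel s (a i) (a j) else 0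

/-- The potential `U_{N,s}(z) = Σ_{ℓ=0}^{N−1} k_s(z, a_ℓ)`. -/
def pot (s : ℝ) (a : ℕ → ℂ) (N : ℕ) (z : ℂ) : ℝ :=
  ∑ l ∈ Finset.range N, kernel s z (a l)

/-- A greedy `s`-energy sequence on the unit circle: all points lie on `S¹`, and for
every `N ≥ 1` the point `a_N` minimizes (if `s ≥ 0`) resp. maximizes (if `s < 0`)
the potential `U_{N,s}` over `S¹`. -/
def IsGreedy (s : ℝ) (a : ℕ → ℂ) : Prop :=
  (∀ n, ‖a n‖ = 1) ∧
    ∀ N, 1 ≤ N →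
      ((0 ≤ s → ∀ z : ℂ, ‖z‖ = 1 → pot s a N (a N) ≤ pot s a N z) ∧
        (s < 0 → ∀ z : ℂ, ‖z‖ = 1 → pot s a N z ≤ pot s a N (a N)))

/-- `I_s(σ) = 2^{−s} Γ((1−s)/2) / (√π Γ(1 − s/2))`. -/
def Isigma (s : ℝ) : ℝ :=
  (2 : ℝ) ^ (-s) / Real.sqrt Real.pi * (Real.Gamma ((1 - s) / 2) / Real.Gamma (1 - s / 2))

/-- The value `ζ(s)` of the Riemann zeta function at a real `s` (real part of the
analytically continued zeta function). -/
def zetaR (s : ℝ) : ℝ := (riemannZeta (s : ℂ)).re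

open Finset Real

/-! ### Binary expansion basics -/

private lemma sum_testBit (M : ℕ) : ∀ N < 2^M,
    ∑ i ∈ range M, (if N.testBit i then 2^i else 0) = N := by
  induction M with
  | zero => intro N h; interval_cases N; simp
  | succ M ih =>
    intro N h
    rw [Finset.sum_range_succ']
    have h2 : N / 2 < 2 ^ M := by rw [pow_succ] at h; omega
    have e1 : ∀ k, N.testBit (k+1) = (N/2).testBit k := by
      intro k; simp [Nat.testBit_succ]
    have hrec := ih (N/2) h2
    calc (∑ k ∈ range M, if N.testBit (k + 1) then 2 ^ (k + 1) else 0) + (if N.testBit 0 then 2 ^ 0 else 0)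
        = 2 * (∑ k ∈ range M, if (N/2).testBit k then 2 ^ k else 0) + N % 2 := by
          rw [Finset.mul_sum]
          congr 1
          · apply Finset.sum_congr rfl; intro k _; rw [e1]; split <;> ring
          · rw [Nat.testBit_zero]; rcases Nat.mod_two_eq_zero_or_one N with h|h <;> simp [h]
      _ = N := by rw [hrec]; omega

private lemma filter_range_map_sum (q : ℕ → Bool) (f : ℕ → ℕ) (M : ℕ) :
    (((List.range M).filter q).map f).sum = ∑ i ∈ range M, (if q i then f i else 0) := by
  induction M with
  | zero => simp
  | succ M ih =>
    rw [List.range_succ, List.filter_append, List.map_append, List.sum_append,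
      Finset.sum_range_succ, ih]
    by_cases h : q M <;> simp [h]

lemma binExps_sum (N : ℕ) : (((binExps N)).map fun n => 2^n).sum = N := by
  unfold binExps
  rw [List.map_reverse, List.sum_reverse, filter_range_map_sum]
  exact sum_testBit (N+1) N ((Nat.lt_two_pow_self (n := N)).trans_le
    (Nat.pow_le_pow_right (by norm_num) (Nat.le_succ N)))

lemma binExps_sorted (N : ℕ) : List.Pairwise (· > ·) (binExps N) := by
  unfold binExps
  rw [List.pairwise_reverse]
  exact List.pairwise_lt_range.filter _

lemma binExps_testBit (N : ℕ) {k : ℕ} (hk : k < (binExps N).length) :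
    N.testBit ((binExps N)[k]) = true := by
  have hmem : (binExps N)[k] ∈ binExps N := List.getElem_mem hk
  unfold binExps at hmem
  rw [List.mem_reverse, List.mem_filter] at hmem
  exact hmem.2

lemma binExps_pow_le (N : ℕ) {k : ℕ} (hk : k < (binExps N).length) :
    2 ^ ((binExps N)[k]) ≤ N :=
  Nat.ge_two_pow_of_testBit (binExps_testBit N hk)

lemma binExps_anti (N : ℕ) {i j : ℕ} (hij : i < j) (hj : j < (binExps N).length) :
    (binExps N)[j]'hj < (binExps N)[i]'(hij.trans hj) := by
  have := (List.pairwise_iff_get.1 (binExps_sorted N)) ⟨i, hij.trans hj⟩ ⟨j, hj⟩ hij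
  simpa using this

lemma binExps_gap (N : ℕ) {k j : ℕ} (hkj : k ≤ j) (hj : j < (binExps N).length) :
    (binExps N)[j]'hj + (j - k) ≤ (binExps N)[k]'(lt_of_le_of_lt hkj hj) := by
  obtain ⟨i, rfl⟩ := Nat.exists_eq_add_of_le hkj
  induction i with
  | zero => simp
  | succ i ih =>
    have hj' : k + i < (binExps N).length := by omega
    have h1 := binExps_anti N (show k + i < k + (i+1) by omega) hj
    have h2 := ih (by omega) hj'
    omega

/-! ### eta facts -/

lemma eta_eq (N : ℕ) {k : ℕ} (hk : k < pbin N) :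
    eta N k = 2 ^ ((binExps N)[k]'hk) / N := by
  unfold eta
  rw [List.getD_eq_getElem _ _ (by simpa [pbin] using hk)]
  simp
  rfl

lemma eta_eq_zero (N : ℕ) {k : ℕ} (hk : pbin N ≤ k) : eta N k = 0 := by
  unfold eta
  rw [List.getD_eq_default _ _ (by simpa [pbin] using hk)]

lemma eta_nonneg (N k : ℕ) : 0 ≤ eta N k := by
  rcases lt_or_ge k (pbin N) with h | h
  · rw [eta_eq N h]; positivity
  · rw [eta_eq_zero N h]

lemma eta_pos (N : ℕ) (hN : 1 ≤ N) {k : ℕ} (hk : k < pbin N) : 0 < eta N k := by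
  rw [eta_eq N hk]
  have : (0:ℝ) < N := by exact_mod_cast hN
  positivity

lemma eta_le_one (N : ℕ) (hN : 1 ≤ N) (k : ℕ) : eta N k ≤ 1 := by
  rcases lt_or_ge k (pbin N) with h | h
  · rw [eta_eq N h]
    have hle : (2:ℝ) ^ ((binExps N)[k]) ≤ N := by
      exact_mod_cast binExps_pow_le N (by simpa [pbin] using h)
    have : (0:ℝ) < N := by exact_mod_cast hN
    rw [div_le_one this]; exact hle
  · rw [eta_eq_zero N h]; norm_num

private lemma sum_getD (l : List ℝ) : ∑ k ∈ range l.length, l.getD k 0 = l.sum := by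
  induction l with
  | nil => simp
  | cons a t ih => rw [List.length_cons, Finset.sum_range_succ', List.sum_cons, ← ih]; simp [add_comm]

private lemma list_sum_pow_div (N : ℕ) (l : List ℕ) :
    (l.map fun n => (2:ℝ)^n / (N:ℝ)).sum = ((l.map fun n => 2^n).sum : ℕ) / (N:ℝ) := by
  induction l with
  | nil => simp
  | cons a t ih => simp only [List.map_cons, List.sum_cons, ih]; push_cast; ring

lemma eta_sum (N : ℕ) (hN : 1 ≤ N) : ∑ k ∈ range (pbin N), eta N k = 1 := by
  have hlen : pbin N = ((binExps N).map fun n => (2:ℝ)^n / (N:ℝ)).length := by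
    simp [pbin]
  unfold eta
  rw [hlen, sum_getD, list_sum_pow_div, binExps_sum]
  have : (0:ℝ) < N := by exact_mod_cast hN
  field_simp

lemma pbin_pos (N : ℕ) (hN : 1 ≤ N) : 0 < pbin N := by
  by_contra h
  push_neg at h
  have := eta_sum N hN
  rw [Nat.le_zero.1 h] at this
  simp at this

lemma eta_decay (N : ℕ) (hN : 1 ≤ N) {k j : ℕ} (hkj : k ≤ j) :
    eta N j ≤ (1/2:ℝ)^(j-k) * eta N k := by
  rcases lt_or_ge j (pbin N) with hj | hj
  · have hk : k < pbin N := lt_of_le_of_lt hkj hj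
    rw [eta_eq N hj, eta_eq N hk]
    have hgap := binExps_gap N hkj (by simpa [pbin] using hj)
    have h1 : (2:ℝ) ^ ((binExps N)[j]'(by simpa [pbin] using hj)) * 2^(j-k)
        ≤ 2 ^ ((binExps N)[k]'(by simpa [pbin] using hk)) := by
      rw [← pow_add]
      exact_mod_cast Nat.pow_le_pow_right (by norm_num) hgap
    have hN0 : (0:ℝ) < N := by exact_mod_cast hN
    rw [div_pow, one_pow, div_mul_div_comm, one_mul,
      div_le_div_iff₀ hN0 (by positivity)]
    calc (2:ℝ) ^ ((binExps N)[j]'_) * (2^(j-k) * N)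
        = ((2:ℝ) ^ ((binExps N)[j]'_) * 2^(j-k)) * N := (mul_assoc _ _ _).symm
      _ ≤ (2:ℝ) ^ ((binExps N)[k]'_) * N := by
          exact mul_le_mul_of_nonneg_right h1 hN0.le
  · rw [eta_eq_zero N hj]
    have := eta_nonneg N k
    positivity

lemma eta_le_pow (N : ℕ) (hN : 1 ≤ N) (k : ℕ) : eta N k ≤ (1/2:ℝ)^k := by
  have h := eta_decay N hN (Nat.zero_le k)
  rw [Nat.sub_zero] at h
  have h0 := eta_le_one N hN 0
  have h2 : (0:ℝ) ≤ (1/2:ℝ)^k := by positivity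
  nlinarith

private lemma geom_lt (r : ℝ) (h0 : 0 < r) (h1 : r < 1) (p : ℕ) :
    ∑ k ∈ range p, r^k < 1/(1-r) := by
  rw [geom_sum_eq (by linarith) p,
    show (r^p - 1)/(r - 1) = (1-r^p)/(1-r) by rw [← neg_div_neg_eq]; ring_nf,
    div_lt_div_iff₀ (by linarith) (by linarith)]
  have : 0 < r^p := by positivity
  nlinarith

/-- tail sums -/
lemma tail_nonneg (N : ℕ) (k : ℕ) : 0 ≤ ∑ j ∈ Finset.Ico (k+1) (pbin N), eta N j :=
  Finset.sum_nonneg fun j _ => eta_nonneg N j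

lemma tail_le_eta (N : ℕ) (hN : 1 ≤ N) (k : ℕ) :
    ∑ j ∈ Finset.Ico (k+1) (pbin N), eta N j ≤ eta N k := by
  have h1 : ∑ j ∈ Finset.Ico (k+1) (pbin N), eta N j
      ≤ ∑ j ∈ Finset.Ico (k+1) (pbin N), (1/2:ℝ)^(j-k) * eta N k := by
    apply Finset.sum_le_sum
    intro j hj
    rw [Finset.mem_Ico] at hj
    exact eta_decay N hN (by omega : k ≤ j)
  refine h1.trans ?_
  rw [← Finset.sum_mul]
  have h2 : ∑ j ∈ Finset.Ico (k+1) (pbin N), (1/2:ℝ)^(j-k) ≤ 1 := by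
    rw [Finset.sum_Ico_eq_sum_range]
    have : ∀ i ∈ range (pbin N - (k+1)), (1/2:ℝ)^(k+1+i-k) = (1/2) * (1/2)^i := by
      intro i _
      rw [show k+1+i-k = i+1 by omega, pow_succ]; ring
    rw [Finset.sum_congr rfl this, ← Finset.mul_sum]
    have := (geom_lt (1/2) (by norm_num) (by norm_num) (pbin N - (k+1))).le
    norm_num at this ⊢
    linarith
  calc (∑ j ∈ Finset.Ico (k+1) (pbin N), (1/2:ℝ)^(j-k)) * eta N k
      ≤ 1 * eta N k := mul_le_mul_of_nonneg_right h2 (eta_nonneg N k)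
    _ = eta N k := one_mul _

lemma tail_le_half (N : ℕ) (hN : 1 ≤ N) (k : ℕ) :
    ∑ j ∈ Finset.Ico (k+1) (pbin N), eta N j ≤ 1/2 := by
  have hsub : ∑ j ∈ Finset.Ico (k+1) (pbin N), eta N j
      ≤ ∑ j ∈ Finset.Ico 1 (pbin N), eta N j := by
    apply Finset.sum_le_sum_of_subset_of_nonneg
    · apply Finset.Ico_subset_Ico (by omega) le_rfl
    · intro j _ _; exact eta_nonneg N j
  have hp := pbin_pos N hN
  have hsplit : eta N 0 + ∑ j ∈ Finset.Ico 1 (pbin N), eta N j = 1 := by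
    rw [← eta_sum N hN, Finset.range_eq_Ico, ← Finset.sum_eq_sum_Ico_succ_bot hp]
  have h0 := tail_le_eta N hN 0
  simp only [Nat.zero_add] at h0
  linarith

private lemma sum_k_half_eq (p : ℕ) :
    ∑ k ∈ range p, (k:ℝ)*(1/2)^k = 2 - (p+1)*(2*(1/2)^p) := by
  induction p with
  | zero => norm_num
  | succ p ih =>
    rw [Finset.sum_range_succ, ih, pow_succ]
    push_cast
    ring

private lemma sum_k_half_le (p : ℕ) : ∑ k ∈ range p, (k:ℝ)*(1/2)^k ≤ 2 := by
  rw [sum_k_half_eq]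
  have h1 : (0:ℝ) ≤ (p+1)*(2*(1/2)^p) := by positivity
  linarith

lemma sum_k_eta_le (N : ℕ) (hN : 1 ≤ N) :
    ∑ k ∈ range (pbin N), (k:ℝ) * eta N k ≤ 2 := by
  refine le_trans ?_ (sum_k_half_le (pbin N))
  apply Finset.sum_le_sum
  intro k _
  exact mul_le_mul_of_nonneg_left (eta_le_pow N hN k) (by positivity)

lemma sum_sq_le_one (N : ℕ) (hN : 1 ≤ N) :
    ∑ k ∈ range (pbin N), (eta N k)^2 ≤ 1 := by
  rw [← eta_sum N hN]
  apply Finset.sum_le_sum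
  intro k _
  have h1 := eta_nonneg N k
  have h2 := eta_le_one N hN k
  nlinarith

/-- per-term entropy bound -/
lemma ent_term (N : ℕ) (hN : 1 ≤ N) {k : ℕ} (hk : k < pbin N) :
    -(eta N k * Real.log (eta N k)) ≤ (k:ℝ) * eta N k * Real.log 2 + (1/2:ℝ)^k := by
  set t := eta N k with ht
  have htpos : 0 < t := eta_pos N hN hk
  have htle : t ≤ (1/2:ℝ)^k := eta_le_pow N hN k
  have h2k : (0:ℝ) < 2^k := by positivity
  have hlog : Real.log (1/t) = k * Real.log 2 + Real.log (1/(2^k * t)) := by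
    rw [show (1/t : ℝ) = 2^k * (1/(2^k*t)) by field_simp,
      Real.log_mul (by positivity) (by positivity), Real.log_pow]
  have hb : Real.log (1/(2^k*t)) ≤ 1/(2^k*t) - 1 :=
    Real.log_le_sub_one_of_pos (by positivity)
  have key : -(t * Real.log t) = t * Real.log (1/t) := by
    rw [one_div, Real.log_inv]; ring
  rw [key, hlog]
  have h3 : t * Real.log (1/(2^k*t)) ≤ t * (1/(2^k*t) - 1) :=
    mul_le_mul_of_nonneg_left hb htpos.le
  have h4 : t * (1/(2^k*t) - 1) = (1/2)^k - t * 2^k * (1/2)^k := by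
    have : (2:ℝ)^k * (1/2)^k = 1 := by rw [← mul_pow]; norm_num
    rw [mul_assoc, this, mul_sub, mul_one, mul_one_div, mul_comm, ← div_div, div_self htpos.ne', one_div, one_div, inv_pow]
  have h5 : (0:ℝ) ≤ t * 2^k * (1/2)^k := by positivity
  nlinarith [mul_le_mul_of_nonneg_left (le_refl (Real.log 2)) htpos.le]

lemma ent_nonneg (N : ℕ) (hN : 1 ≤ N) {k : ℕ} :
    0 ≤ -(eta N k * Real.log (eta N k)) := by
  have h1 := eta_nonneg N k
  have h2 := eta_le_one N hN k
  have := Real.log_nonpos h1 h2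
  nlinarith

lemma ent_sum_le (N : ℕ) (hN : 1 ≤ N) :
    ∑ k ∈ range (pbin N), -(eta N k * Real.log (eta N k)) ≤ 2 * Real.log 2 + 2 := by
  have h1 : ∑ k ∈ range (pbin N), -(eta N k * Real.log (eta N k))
      ≤ ∑ k ∈ range (pbin N), ((k:ℝ) * eta N k * Real.log 2 + (1/2:ℝ)^k) := by
    apply Finset.sum_le_sum
    intro k hk
    exact ent_term N hN (Finset.mem_range.1 hk)
  refine h1.trans ?_
  rw [Finset.sum_add_distrib]
  have h2 : ∑ k ∈ range (pbin N), (k:ℝ) * eta N k * Real.log 2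
      = (∑ k ∈ range (pbin N), (k:ℝ) * eta N k) * Real.log 2 := by
    rw [Finset.sum_mul]
  have h3 := sum_k_eta_le N hN
  have h4 : ∑ k ∈ range (pbin N), (1/2:ℝ)^k ≤ 2 := by
    have := (geom_lt (1/2) (by norm_num) (by norm_num) (pbin N)).le
    norm_num at this
    linarith
  have hlog2 : (0:ℝ) ≤ Real.log 2 := Real.log_nonneg (by norm_num)
  rw [h2]
  nlinarith

private lemma sq_sum_ident (x : ℕ → ℝ) (p : ℕ) :
    (∑ k ∈ range p, x k)^2
      = ∑ k ∈ range p, (x k)^2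
        + 2 * ∑ k ∈ range p, x k * ∑ j ∈ Finset.Ico (k+1) p, x j := by
  induction p with
  | zero => simp
  | succ p ih =>
    rw [Finset.sum_range_succ, add_sq, ih, Finset.sum_range_succ (f := fun k => (x k)^2)]
    have h1 : ∑ k ∈ range (p+1), x k * ∑ j ∈ Finset.Ico (k+1) (p+1), x j
        = (∑ k ∈ range p, x k * ∑ j ∈ Finset.Ico (k+1) p, x j)
          + (∑ k ∈ range p, x k) * x p := by
      rw [Finset.sum_range_succ, Finset.Ico_self, Finset.sum_empty, mul_zero, add_zero,
        Finset.sum_mul]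
      rw [← Finset.sum_add_distrib]
      apply Finset.sum_congr rfl
      intro k hk
      rw [Finset.mem_range] at hk
      rw [Finset.sum_Ico_succ_top (by omega : k + 1 ≤ p)]
      ring
    rw [h1]
    ring

lemma Heta_zero (N : ℕ) (hN : 1 ≤ N) : Heta N 0 = 1 := by
  unfold Heta Hvec
  rw [Real.rpow_zero]
  norm_num
  rw [eta_sum N hN]

lemma Heta_one (N : ℕ) (hN : 1 ≤ N) : Heta N 1 = 1 := by
  unfold Heta Hvec
  have e1 : ∀ k ∈ range (pbin N), eta N k ^ (1+1 : ℝ) = eta N k ^ (2:ℕ) := by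
    intro k _
    rw [show (1+1 : ℝ) = ((2:ℕ):ℝ) by norm_num, Real.rpow_natCast]
  have e2 : ∀ k ∈ range (pbin N),
      eta N k ^ (1:ℝ) * ∑ j ∈ Finset.Ico (k+1) (pbin N), eta N j
      = eta N k * ∑ j ∈ Finset.Ico (k+1) (pbin N), eta N j := by
    intro k _
    rw [Real.rpow_one]
  rw [Finset.sum_congr rfl e1, Finset.sum_congr rfl e2, Real.rpow_one]
  norm_num
  rw [← sq_sum_ident, eta_sum N hN]
  norm_num

private lemma two_rpow_add_one (s : ℝ) : (2:ℝ) ^ (s+1) = 2^s * 2 := by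
  rw [Real.rpow_add (by norm_num : (0:ℝ) < 2), Real.rpow_one]

lemma S1_pos (N : ℕ) (hN : 1 ≤ N) (s : ℝ) :
    0 < ∑ k ∈ range (pbin N), eta N k ^ (s+1) := by
  apply Finset.sum_pos
  · intro k hk
    exact Real.rpow_pos_of_pos (eta_pos N hN (Finset.mem_range.1 hk)) _
  · exact ⟨0, Finset.mem_range.2 (pbin_pos N hN)⟩

lemma S2_nonneg (N : ℕ) (s : ℝ) :
    0 ≤ ∑ k ∈ range (pbin N), eta N k ^ s * ∑ j ∈ Finset.Ico (k+1) (pbin N), eta N j := by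
  apply Finset.sum_nonneg
  intro k _
  exact mul_nonneg (Real.rpow_nonneg (eta_nonneg N k) s) (tail_nonneg N k)

/-- `S2 ≤ S1` when `s` is arbitrary (uses `T_k ≤ θ_k`). -/
lemma S2_le_S1 (N : ℕ) (hN : 1 ≤ N) (s : ℝ) :
    ∑ k ∈ range (pbin N), eta N k ^ s * ∑ j ∈ Finset.Ico (k+1) (pbin N), eta N j
      ≤ ∑ k ∈ range (pbin N), eta N k ^ (s+1) := by
  apply Finset.sum_le_sum
  intro k hk
  have hpos := eta_pos N hN (Finset.mem_range.1 hk)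
  rw [Real.rpow_add hpos, Real.rpow_one]
  exact mul_le_mul_of_nonneg_left (tail_le_eta N hN k) (Real.rpow_nonneg hpos.le s)

lemma Heta_pos_nonneg (N : ℕ) (hN : 1 ≤ N) {s : ℝ} (hs : 0 ≤ s) : 0 < Heta N s := by
  unfold Heta Hvec
  have h1 := S1_pos N hN s
  have h2 := S2_nonneg N s
  have h3 : (0:ℝ) ≤ 2 * ((2:ℝ)^s - 1) := by
    have := Real.one_le_rpow (by norm_num : (1:ℝ) ≤ 2) hs
    linarith
  nlinarith

lemma Heta_pos_neg (N : ℕ) (hN : 1 ≤ N) {s : ℝ} (h1 : -1 < s) (h2 : s < 0) :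
    ((2:ℝ)^(s+1) - 1) * ∑ k ∈ range (pbin N), eta N k ^ (s+1) ≤ Heta N s ∧ 0 < Heta N s := by
  have hc : 2 * ((2:ℝ)^s - 1) < 0 := by
    have := Real.rpow_lt_one_of_one_lt_of_neg (by norm_num : (1:ℝ) < 2) h2
    linarith
  have hS21 := S2_le_S1 N hN s
  have hS1 := S1_pos N hN s
  have hmul : 2 * ((2:ℝ)^s - 1) * (∑ k ∈ range (pbin N), eta N k ^ (s+1))
      ≤ 2 * ((2:ℝ)^s - 1) * ∑ k ∈ range (pbin N), eta N k ^ s * ∑ j ∈ Finset.Ico (k+1) (pbin N), eta N j :=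
    mul_le_mul_of_nonpos_left hS21 hc.le
  have hfac : (2:ℝ)^(s+1) - 1 = 1 + 2 * ((2:ℝ)^s - 1) := by
    rw [two_rpow_add_one]; ring
  have hfacpos : 0 < (2:ℝ)^(s+1) - 1 := by
    have := (Real.one_lt_rpow_iff_of_pos (x := 2) (y := s+1) (by norm_num)).2
      (Or.inl ⟨by norm_num, by linarith⟩)
    linarith
  constructor
  · unfold Heta Hvec
    rw [hfac]
    nlinarith
  · have : ((2:ℝ)^(s+1) - 1) * ∑ k ∈ range (pbin N), eta N k ^ (s+1) > 0 :=
      mul_pos hfacpos hS1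
    unfold Heta Hvec
    rw [hfac] at this
    nlinarith

lemma S1_le_one (N : ℕ) (hN : 1 ≤ N) {s : ℝ} (hs : 0 ≤ s) :
    ∑ k ∈ range (pbin N), eta N k ^ (s+1) ≤ 1 := by
  refine le_trans (Finset.sum_le_sum ?_) (le_of_eq (eta_sum N hN))
  intro k hk
  have hpos := eta_pos N hN (Finset.mem_range.1 hk)
  calc eta N k ^ (s+1) ≤ eta N k ^ (1:ℝ) :=
        Real.rpow_le_rpow_of_exponent_ge hpos (eta_le_one N hN k) (by linarith)
    _ = eta N k := Real.rpow_one _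

private lemma half_rpow (s : ℝ) : ((1/2:ℝ)) ^ s = ((2:ℝ)^s)⁻¹ := by
  rw [one_div, Real.inv_rpow (by norm_num)]

private lemma half_pow_rpow (k : ℕ) (s : ℝ) : ((1/2:ℝ)^k) ^ s = ((1/2:ℝ)^s)^k := by
  rw [← Real.rpow_natCast (1/2 : ℝ) k, ← Real.rpow_natCast ((1/2:ℝ)^s) k,
    ← Real.rpow_mul (by norm_num), ← Real.rpow_mul (by norm_num), mul_comm]

lemma sum_rpow_le (N : ℕ) (hN : 1 ≤ N) {s : ℝ} (hs : 0 < s) :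
    ∑ k ∈ range (pbin N), eta N k ^ s ≤ (2:ℝ)^s / ((2:ℝ)^s - 1) := by
  have h1 : ∑ k ∈ range (pbin N), eta N k ^ s ≤ ∑ k ∈ range (pbin N), ((1/2:ℝ)^s)^k := by
    apply Finset.sum_le_sum
    intro k _
    rw [← half_pow_rpow]
    exact Real.rpow_le_rpow (eta_nonneg N k) (eta_le_pow N hN k) hs.le
  refine h1.trans ?_
  have hr0 : (0:ℝ) < (1/2:ℝ)^s := Real.rpow_pos_of_pos (by norm_num) s
  have hr1 : (1/2:ℝ)^s < 1 := Real.rpow_lt_one (by norm_num) (by norm_num) hs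
  have h2 := (geom_lt _ hr0 hr1 (pbin N)).le
  refine h2.trans ?_
  rw [half_rpow]
  have ha : (1:ℝ) < (2:ℝ)^s :=
    (Real.one_lt_rpow_iff_of_pos (x := 2) (y := s) (by norm_num)).2
      (Or.inl ⟨by norm_num, hs⟩)
  have hne : ((2:ℝ)^s) ≠ 0 := by positivity
  have hne1 : ((2:ℝ)^s) - 1 ≠ 0 := by linarith
  have heq : 1/(1 - ((2:ℝ)^s)⁻¹) = (2:ℝ)^s/((2:ℝ)^s - 1) := by
    field_simp
  rw [heq]

lemma Heta_lt_big (N : ℕ) (hN : 1 ≤ N) {s : ℝ} (hs : 1 ≤ s) :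
    Heta N s < (2:ℝ)^(s+1) - 1 := by
  have h2s : (2:ℝ)^(1:ℝ) ≤ 2^s := Real.rpow_le_rpow_of_exponent_le (by norm_num) hs
  rw [Real.rpow_one] at h2s
  have hS1 := S1_le_one N hN (by linarith : (0:ℝ) ≤ s)
  have hS2 : ∑ k ∈ range (pbin N), eta N k ^ s * ∑ j ∈ Finset.Ico (k+1) (pbin N), eta N j
      ≤ 1/2 := by
    have h1 : ∀ k ∈ range (pbin N),
        eta N k ^ s * ∑ j ∈ Finset.Ico (k+1) (pbin N), eta N j ≤ eta N k * (1/2) := by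
      intro k hk
      have hpos := eta_pos N hN (Finset.mem_range.1 hk)
      have hth : eta N k ^ s ≤ eta N k := by
        calc eta N k ^ s ≤ eta N k ^ (1:ℝ) :=
              Real.rpow_le_rpow_of_exponent_ge hpos (eta_le_one N hN k) hs
          _ = eta N k := Real.rpow_one _
      exact mul_le_mul hth (tail_le_half N hN k) (tail_nonneg N k) (eta_nonneg N k)
    calc ∑ k ∈ range (pbin N), eta N k ^ s * ∑ j ∈ Finset.Ico (k+1) (pbin N), eta N j
        ≤ ∑ k ∈ range (pbin N), eta N k * (1/2) := Finset.sum_le_sum h1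
      _ = (∑ k ∈ range (pbin N), eta N k) * (1/2) := by rw [Finset.sum_mul]
      _ = 1/2 := by rw [eta_sum N hN]; norm_num
  have hc : (0:ℝ) ≤ 2 * ((2:ℝ)^s - 1) := by linarith
  have : Heta N s ≤ 1 + 2 * ((2:ℝ)^s - 1) * (1/2) := by
    unfold Heta Hvec
    have := mul_le_mul_of_nonneg_left hS2 hc
    linarith
  rw [two_rpow_add_one]
  nlinarith

lemma Heta_lt_mid (N : ℕ) (hN : 1 ≤ N) {s : ℝ} (hs0 : 0 < s) (hs1 : s < 1) :
    Heta N s < ((2:ℝ)^(s+1) - 1) / ((2:ℝ)^s - 1) := by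
  set a := (2:ℝ)^s with ha
  have ha1 : (1:ℝ) < a :=
    (Real.one_lt_rpow_iff_of_pos (x := 2) (y := s) (by norm_num)).2
      (Or.inl ⟨by norm_num, hs0⟩)
  have ha2 : a < 2 := by
    have := Real.rpow_lt_rpow_of_exponent_lt (by norm_num : (1:ℝ) < 2) hs1
    rwa [Real.rpow_one] at this
  have hS1 := S1_le_one N hN hs0.le
  have hsum := sum_rpow_le N hN hs0
  have hS2 : ∑ k ∈ range (pbin N), eta N k ^ s * ∑ j ∈ Finset.Ico (k+1) (pbin N), eta N j
      ≤ (1/2) * (a/(a-1)) := by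
    have h1 : ∀ k ∈ range (pbin N),
        eta N k ^ s * ∑ j ∈ Finset.Ico (k+1) (pbin N), eta N j ≤ eta N k ^ s * (1/2) := by
      intro k _
      exact mul_le_mul_of_nonneg_left (tail_le_half N hN k)
        (Real.rpow_nonneg (eta_nonneg N k) s)
    calc ∑ k ∈ range (pbin N), eta N k ^ s * ∑ j ∈ Finset.Ico (k+1) (pbin N), eta N j
        ≤ ∑ k ∈ range (pbin N), eta N k ^ s * (1/2) := Finset.sum_le_sum h1
      _ = (∑ k ∈ range (pbin N), eta N k ^ s) * (1/2) := by rw [Finset.sum_mul]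
      _ ≤ (a/(a-1)) * (1/2) := by
          apply mul_le_mul_of_nonneg_right _ (by norm_num)
          exact hsum
      _ = (1/2) * (a/(a-1)) := by ring
  have hH : Heta N s ≤ 1 + a := by
    unfold Heta Hvec
    have hc : (0:ℝ) ≤ 2 * (a - 1) := by linarith
    have h3 := mul_le_mul_of_nonneg_left hS2 hc
    have h4 : 2 * (a-1) * ((1/2) * (a/(a-1))) = a := by
      have hne1 : a - 1 ≠ 0 := by linarith
      field_simp
    rw [h4] at h3
    linarith
  have hfinal : 1 + a < ((2:ℝ)^(s+1) - 1) / (a - 1) := by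
    rw [two_rpow_add_one, ← ha, lt_div_iff₀ (by linarith)]
    nlinarith
  linarith

lemma Heta_lt_neg (N : ℕ) (hN : 1 ≤ N) {s : ℝ} (h1 : -1 < s) (h2 : s < 0) :
    Heta N s < (2:ℝ)^(s+1) / ((2:ℝ)^(s+1) - 1) := by
  set a := (2:ℝ)^(s+1) with ha
  have ha1 : (1:ℝ) < a :=
    (Real.one_lt_rpow_iff_of_pos (x := 2) (y := s+1) (by norm_num)).2
      (Or.inl ⟨by norm_num, by linarith⟩)
  have hup : Heta N s ≤ ∑ k ∈ range (pbin N), eta N k ^ (s+1) := by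
    unfold Heta Hvec
    have hc : 2 * ((2:ℝ)^s - 1) < 0 := by
      have := Real.rpow_lt_one_of_one_lt_of_neg (by norm_num : (1:ℝ) < 2) h2
      linarith
    have hS2 := S2_nonneg N s
    nlinarith
  have hgeo : ∑ k ∈ range (pbin N), eta N k ^ (s+1) < 1/(1 - (1/2:ℝ)^(s+1)) := by
    have hterm : ∀ k ∈ range (pbin N), eta N k ^ (s+1) ≤ ((1/2:ℝ)^(s+1))^k := by
      intro k _
      rw [← half_pow_rpow]
      exact Real.rpow_le_rpow (eta_nonneg N k) (eta_le_pow N hN k) (by linarith)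
    have hr0 : (0:ℝ) < (1/2:ℝ)^(s+1) := Real.rpow_pos_of_pos (by norm_num) _
    have hr1 : (1/2:ℝ)^(s+1) < 1 := Real.rpow_lt_one (by norm_num) (by norm_num) (by linarith)
    calc ∑ k ∈ range (pbin N), eta N k ^ (s+1) ≤ ∑ k ∈ range (pbin N), ((1/2:ℝ)^(s+1))^k :=
          Finset.sum_le_sum hterm
      _ < 1/(1 - (1/2:ℝ)^(s+1)) := geom_lt _ hr0 hr1 _
  have heq : 1/(1 - (1/2:ℝ)^(s+1)) = a / (a - 1) := by
    rw [half_rpow, ← ha]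
    have hane : a ≠ 0 := by positivity
    field_simp
  rw [← heq]
  linarith

private lemma log_four : Real.log 4 = 2 * Real.log 2 := by
  rw [show (4:ℝ) = 2^2 by norm_num, Real.log_pow]; push_cast; ring

private lemma log_two_half : (1/2:ℝ) ≤ Real.log 2 := by
  have := Real.log_two_gt_d9
  linarith

private lemma log_two_twothirds : (2/3:ℝ) ≤ Real.log 2 := by
  have := Real.log_two_gt_d9
  linarith

lemma Reta_abs (N : ℕ) (hN : 1 ≤ N) : |Reta N| ≤ 6 * Real.log 2 := by
  unfold Reta Rvec
  set D := ∑ k ∈ range (pbin N), (k:ℝ) * eta N k with hD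
  have hD0 : 0 ≤ D := Finset.sum_nonneg fun k _ => mul_nonneg (by positivity) (eta_nonneg N k)
  have hD2 : D ≤ 2 := sum_k_eta_le N hN
  have hEnt : -∑ k ∈ range (pbin N), eta N k * Real.log (eta N k)
      = ∑ k ∈ range (pbin N), -(eta N k * Real.log (eta N k)) := by
    rw [Finset.sum_neg_distrib]
  have hEnt0 : 0 ≤ ∑ k ∈ range (pbin N), -(eta N k * Real.log (eta N k)) :=
    Finset.sum_nonneg fun k _ => ent_nonneg N hN
  have hEnt2 := ent_sum_le N hN
  have hlog2 : (0:ℝ) < Real.log 2 := Real.log_pos (by norm_num)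
  have h12 := log_two_half
  rw [abs_le]
  constructor <;> nlinarith [hEnt, hEnt0, hEnt2]

lemma Keta_abs (N : ℕ) (hN : 1 ≤ N) : |Keta N| ≤ 5 * Real.log 4 := by
  unfold Keta Kvec
  have hlog2 : (0:ℝ) < Real.log 2 := Real.log_pos (by norm_num)
  set Ent := ∑ k ∈ range (pbin N), -(eta N k * Real.log (eta N k)) with hEntdef
  have hEnt0 : 0 ≤ Ent := Finset.sum_nonneg fun k _ => ent_nonneg N hN
  have hEnt2 := ent_sum_le N hN
  rw [← hEntdef] at hEnt2
  -- the quadratic-log sum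
  have hA : ∑ k ∈ range (pbin N), eta N k ^ 2 * Real.log (eta N k / 4)
      = (∑ k ∈ range (pbin N), eta N k ^ 2 * Real.log (eta N k))
        - (∑ k ∈ range (pbin N), eta N k ^ 2) * Real.log 4 := by
    have hterm : ∀ k ∈ range (pbin N), eta N k ^ 2 * Real.log (eta N k / 4)
        = eta N k ^ 2 * Real.log (eta N k) - eta N k ^ 2 * Real.log 4 := by
      intro k hk
      rw [Real.log_div (ne_of_gt (eta_pos N hN (Finset.mem_range.1 hk))) (by norm_num)]
      ring
    rw [Finset.sum_congr rfl hterm, Finset.sum_sub_distrib, Finset.sum_mul]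
  have hB0 : 0 ≤ ∑ k ∈ range (pbin N), eta N k ^ 2 :=
    Finset.sum_nonneg fun k _ => sq_nonneg _
  have hB1 := sum_sq_le_one N hN
  have hA1 : -Ent ≤ ∑ k ∈ range (pbin N), eta N k ^ 2 * Real.log (eta N k) := by
    rw [hEntdef, ← Finset.sum_neg_distrib]
    apply Finset.sum_le_sum
    intro k hk
    have h1 := eta_nonneg N k
    have h2 := eta_le_one N hN k
    have h3 : Real.log (eta N k) ≤ 0 := Real.log_nonpos h1 h2
    nlinarith [mul_nonneg (mul_nonneg h1 (sub_nonneg.2 h2)) (neg_nonneg.2 h3)]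
  have hA2 : ∑ k ∈ range (pbin N), eta N k ^ 2 * Real.log (eta N k) ≤ 0 := by
    apply Finset.sum_nonpos
    intro k _
    have h3 : Real.log (eta N k) ≤ 0 := Real.log_nonpos (eta_nonneg N k) (eta_le_one N hN k)
    have := sq_nonneg (eta N k)
    nlinarith
  -- the cross sum
  set C := ∑ k ∈ range (pbin N), (∑ j ∈ Finset.Ico (k+1) (pbin N), eta N j)
      * (eta N k * Real.log (eta N k)) with hCdef
  have hC0 : C ≤ 0 := by
    apply Finset.sum_nonpos
    intro k _
    have := ent_nonneg N hN (k := k)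
    have := tail_nonneg N k
    nlinarith
  have hC1 : -((1/2:ℝ)) * Ent ≤ C := by
    rw [hEntdef, hCdef, Finset.mul_sum]
    apply Finset.sum_le_sum
    intro k _
    have h1 := ent_nonneg N hN (k := k)
    have h2 := tail_nonneg N k
    have h3 := tail_le_half N hN k
    nlinarith
  rw [hA, log_four, abs_le]
  have h23 := log_two_twothirds
  have hBlog := mul_le_mul_of_nonneg_right hB1 (by positivity : (0:ℝ) ≤ 2*Real.log 2)
  have hBlog0 : 0 ≤ (∑ k ∈ range (pbin N), eta N k ^ 2) * (2*Real.log 2) := by positivity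
  constructor <;> nlinarith

theorem stmt8 :
    (∀ N : ℕ, 1 ≤ N → Heta N 0 = 1 ∧ Heta N 1 = 1) ∧
    (∀ N : ℕ, 1 ≤ N → ∀ s : ℝ, 1 ≤ s →
      0 < Heta N s ∧ Heta N s < 2 ^ (s + 1) - 1) ∧
    (∀ N : ℕ, 1 ≤ N → ∀ s : ℝ, 0 < s → s < 1 →
      0 < Heta N s ∧ Heta N s < ((2 : ℝ) ^ (s + 1) - 1) / ((2 : ℝ) ^ s - 1)) ∧
    (∀ N : ℕ, 1 ≤ N → ∀ s : ℝ, -1 < s → s < 0 →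
      0 < Heta N s ∧ Heta N s < (2 : ℝ) ^ (s + 1) / ((2 : ℝ) ^ (s + 1) - 1)) ∧
    (∀ N : ℕ, 1 ≤ N → |Keta N| ≤ 5 * Real.log 4) ∧
    (∀ N : ℕ, 1 ≤ N → |Reta N| ≤ 6 * Real.log 2) ∧
    (∀ s : ℝ, -1 < s → ∃ C : ℝ, ∀ N : ℕ, 1 ≤ N → |Heta N s| ≤ C) ∧
    (∃ C : ℝ, ∀ N : ℕ, 1 ≤ N → |Keta N| ≤ C) ∧
    (∃ C : ℝ, ∀ N : ℕ, 1 ≤ N → |Reta N| ≤ C) := by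
  refine ⟨?_, ?_, ?_, ?_, ?_, ?_, ?_, ?_, ?_⟩
  · intro N hN; exact ⟨Heta_zero N hN, Heta_one N hN⟩
  · intro N hN s hs
    exact ⟨Heta_pos_nonneg N hN (by linarith), Heta_lt_big N hN hs⟩
  · intro N hN s h0 h1
    exact ⟨Heta_pos_nonneg N hN h0.le, Heta_lt_mid N hN h0 h1⟩
  · intro N hN s h1 h2
    exact ⟨(Heta_pos_neg N hN h1 h2).2, Heta_lt_neg N hN h1 h2⟩
  · intro N hN; exact Keta_abs N hN
  · intro N hN; exact Reta_abs N hN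
  · intro s hs
    rcases lt_trichotomy s 0 with h | h | h
    · refine ⟨(2:ℝ)^(s+1)/((2:ℝ)^(s+1)-1), fun N hN => ?_⟩
      rw [abs_of_pos ((Heta_pos_neg N hN hs h).2)]
      exact (Heta_lt_neg N hN hs h).le
    · subst h
      exact ⟨1, fun N hN => by rw [Heta_zero N hN]; norm_num⟩
    · rcases lt_trichotomy s 1 with h1 | h1 | h1
      · refine ⟨((2:ℝ)^(s+1)-1)/((2:ℝ)^s-1), fun N hN => ?_⟩
        rw [abs_of_pos (Heta_pos_nonneg N hN h.le)]
        exact (Heta_lt_mid N hN h h1).le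
      · subst h1
        exact ⟨1, fun N hN => by rw [Heta_one N hN]; norm_num⟩
      · refine ⟨(2:ℝ)^(s+1)-1, fun N hN => ?_⟩
        rw [abs_of_pos (Heta_pos_nonneg N hN h.le)]
        exact (Heta_lt_big N hN h1.le).le
  · exact ⟨5 * Real.log 4, fun N hN => Keta_abs N hN⟩
  · exact ⟨6 * Real.log 2, fun N hN => Reta_abs N hN⟩

end GreedyEnergy
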